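/- If the two step ratios are equal, τ' = τ, and 0 < τ ≤ 1.0315, then the stability coefficient of the filtered diffusion term is strictly positive: 1 + 2γ₃ − 2γ₂ − 2γ₁ > 0. (This is the coefficient positivity underlying the paper's claim that the BDF2-TF scheme is stable whenever the step ratio satisfies 0 < τₙ ≤ 1.0315.) -/
import Mathlib

/-- BDF2-TF γ-coefficients. -/
noncomputable def gamma3 (τ τ' : ℝ) : ℝ :=
  τ * τ' * (1 + τ) / ((1 + 2 * τ) * (1 + τ' * (1 + τ)))
noncomputable def gamma2 (τ τ' : ℝ) : ℝ :=
  τ ^ 2 * τ' * (1 + τ) * (1 + τ' * (2 + τ)) /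
    ((1 + 2 * τ) * (1 + τ') * (1 + τ' * (1 + τ)))
noncomputable def gamma1 (τ τ' : ℝ) : ℝ :=
  τ ^ 2 * τ' ^ 3 * (1 + τ) ^ 2 / ((1 + 2 * τ) * (1 + τ') * (1 + τ' * (1 + τ)))

/-- For equal step ratios `τ' = τ` with `0 < τ ≤ 1.0315`, the stability
coefficient of the filtered diffusion term is strictly positive. -/
theorem bdf2tf_filtered_diffusion_coefficient_positive
    (τ τ' : ℝ) (heq : τ' = τ) (h0 : 0 < τ) (h1 : τ ≤ 1.0315) :
    0 < 1 + 2 * gamma3 τ τ' - 2 * gamma2 τ τ' - 2 * gamma1 τ τ' := by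
  rw [heq]
  unfold gamma3 gamma2 gamma1
  have hA : (0:ℝ) < 1 + 2 * τ := by linarith
  have hB : (0:ℝ) < 1 + τ := by linarith
  have hC : (0:ℝ) < 1 + τ * (1 + τ) := by nlinarith
  have hN : 0 < 1+4*τ+8*τ^2+7*τ^3-2*τ^4-8*τ^5-6*τ^6-2*τ^7 := by
    nlinarith [mul_pos h0 h0, sq_nonneg τ, sq_nonneg (τ-1),
      mul_nonneg (sub_nonneg.2 h1) (sq_nonneg τ),
      mul_nonneg (mul_nonneg (sub_nonneg.2 h1) (sub_nonneg.2 h1)) (sq_nonneg τ),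
      mul_nonneg (sub_nonneg.2 h1) (le_of_lt h0), sq_nonneg (τ^2-1),
      mul_nonneg (sub_nonneg.2 h1) (sq_nonneg (τ^2)),
      mul_nonneg (mul_nonneg (sub_nonneg.2 h1) (le_of_lt h0)) (sq_nonneg (τ^2)),
      mul_nonneg (mul_nonneg (sub_nonneg.2 h1) (sub_nonneg.2 h1)) (sq_nonneg (τ^2))]
  have key : 1 + 2 * (τ * τ * (1 + τ) / ((1 + 2 * τ) * (1 + τ * (1 + τ))))
      - 2 * (τ ^ 2 * τ * (1 + τ) * (1 + τ * (2 + τ)) /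
        ((1 + 2 * τ) * (1 + τ) * (1 + τ * (1 + τ))))
      - 2 * (τ ^ 2 * τ ^ 3 * (1 + τ) ^ 2 /
        ((1 + 2 * τ) * (1 + τ) * (1 + τ * (1 + τ))))
      = (1+4*τ+8*τ^2+7*τ^3-2*τ^4-8*τ^5-6*τ^6-2*τ^7) /
        ((1 + 2 * τ) * (1 + τ) * (1 + τ * (1 + τ))) := by
    field_simp
    ring
  rw [key]
  positivity
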